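/- For every prime power q ≥ 2 and every integer n ≥ 2, if a denotes the smallest prime divisor of n and d ≥ n − n/a, then (1/a)·∏_{k=1, a∤k}^{n-1}(q^n − q^k) + Σ_{k=1, a∤k}^{⌊n/2⌋} binom(n,k)_q ≤ q^{nd}, with equality only when n = q = 2 and d = 1. -/

import Mathlib

/-- The Gaussian (`q`-)binomial coefficient `binom(n,k)_q`, via the product formula. -/
noncomputable def gbinom (q n k : ℕ) : ℝ :=
  ∏ i ∈ Finset.range k, ((q : ℝ) ^ (n - i) - 1) / ((q : ℝ) ^ (k - i) - 1)

lemma gbinom_le_pow (q n k : ℕ) (hq : 2 ≤ q) (hkn : k ≤ n) :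
    gbinom q n k ≤ (q : ℝ) ^ (k * (n + 1 - k)) := by
  have hq2 : (2:ℝ) ≤ (q:ℝ) := by exact_mod_cast hq
  have hq1 : (1:ℝ) ≤ (q:ℝ) := by linarith
  unfold gbinom
  calc ∏ i ∈ Finset.range k, ((q:ℝ)^(n-i)-1)/((q:ℝ)^(k-i)-1)
      ≤ ∏ i ∈ Finset.range k, (q:ℝ)^(n+1-k) := by
        apply Finset.prod_le_prod
        · intro i hi
          apply div_nonneg
          · have : (1:ℝ) ≤ (q:ℝ)^(n-i) := one_le_pow₀ hq1
            linarith
          · have : (1:ℝ) ≤ (q:ℝ)^(k-i) := one_le_pow₀ hq1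
            linarith
        · intro i hi
          have hik : i < k := Finset.mem_range.mp hi
          have hki : (2:ℝ) ≤ (q:ℝ)^(k-i) := by
            calc (2:ℝ) ≤ (q:ℝ) := hq2
            _ ≤ (q:ℝ)^(k-i) := le_self_pow₀ (by linarith) (by omega)
          have hpos : (0:ℝ) < (q:ℝ)^(k-i) - 1 := by linarith
          rw [div_le_iff₀ hpos]
          have e1 : (q:ℝ)^(n+1-k) * ((q:ℝ)^(k-i) - 1) = (q:ℝ)^(n+1-i) - (q:ℝ)^(n+1-k) := by
            rw [mul_sub, mul_one, ← pow_add]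
            congr 2
            omega
          rw [e1]
          have h2 : (q:ℝ)^(n+1-i) = (q:ℝ) * (q:ℝ)^(n-i) := by
            rw [← pow_succ']
            congr 1
            omega
          have h3 : (q:ℝ)^(n+1-k) ≤ (q:ℝ)^(n-i) := by
            apply pow_le_pow_right₀ hq1
            omega
          have h4 : (0:ℝ) ≤ (q:ℝ)^(n-i) := by positivity
          nlinarith
  _ = (q:ℝ)^(k*(n+1-k)) := by
        rw [Finset.prod_const, Finset.card_range, ← pow_mul, mul_comm]

lemma sum_pow_le (q n : ℕ) (hq : 2 ≤ q) :
    ∀ f : ℕ, 2 * f ≤ n →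
    ∑ k ∈ Finset.range (f+1), (q:ℝ) ^ (k * (n + 1 - k)) ≤ 2 * (q:ℝ) ^ (f * (n + 1 - f)) := by
  have hq2 : (2:ℝ) ≤ (q:ℝ) := by exact_mod_cast hq
  have hq1 : (1:ℝ) ≤ (q:ℝ) := by linarith
  intro f
  induction f with
  | zero => simp
  | succ f ih =>
    intro hfn
    rw [Finset.sum_range_succ]
    have h1 := ih (by omega)
    have hexp : (f+1) * (n + 1 - (f+1)) = f * (n + 1 - f) + (n - 2*f) := by
      zify [show f + 1 ≤ n + 1 by omega, show f ≤ n + 1 by omega, show 2*f ≤ n by omega]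
      ring
    have key : 2 * (q:ℝ)^(f*(n+1-f)) ≤ (q:ℝ)^((f+1)*(n+1-(f+1))) := by
      rw [hexp, pow_add]
      have hg : (2:ℝ) ≤ (q:ℝ)^(n-2*f) := by
        calc (2:ℝ) ≤ (q:ℝ) := hq2
        _ ≤ (q:ℝ)^(n-2*f) := le_self_pow₀ (by linarith) (by omega)
      have hp : (0:ℝ) ≤ (q:ℝ)^(f*(n+1-f)) := by positivity
      nlinarith
    linarith

lemma expD (n : ℕ) (hn : 3 ≤ n) :
    (n/2) * (n + 1 - n/2) + 2 ≤ n * (n - n / n.minFac) := by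
  rcases Nat.even_or_odd n with he | ho
  · have h2 : n.minFac = 2 := by
      have hd : 2 ∣ n := he.two_dvd
      have h1 : n.minFac ≤ 2 := Nat.minFac_le_of_dvd le_rfl hd
      have h2 : 2 ≤ n.minFac := (Nat.minFac_prime (by omega)).two_le
      omega
    rw [h2]
    obtain ⟨t, rfl⟩ : ∃ t, n = 2 * t := by
      obtain ⟨t, ht⟩ := he
      exact ⟨t, by omega⟩
    have e1 : 2*t/2 = t := Nat.mul_div_cancel_left t (by norm_num)
    rw [e1, show 2*t + 1 - t = t + 1 by omega, show 2*t - t = t by omega]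
    nlinarith [show 2 ≤ t by omega]
  · have ha : 3 ≤ n.minFac := by
      have hp := Nat.minFac_prime (show n ≠ 1 by omega)
      have h2 := hp.two_le
      have : n.minFac ≠ 2 := by
        intro h
        have : 2 ∣ n := h ▸ Nat.minFac_dvd n
        exact (Nat.not_even_iff_odd.mpr ho) (even_iff_two_dvd.mpr this)
      omega
    have hdvd : n.minFac ∣ n := Nat.minFac_dvd n
    have h3u : 3 * (n / n.minFac) ≤ n := by
      calc 3 * (n / n.minFac) ≤ n.minFac * (n / n.minFac) := by
            exact Nat.mul_le_mul_right _ ha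
      _ = n := Nat.mul_div_cancel' hdvd
    have hun : n / n.minFac ≤ n := Nat.div_le_self n _
    set u := n / n.minFac with hu
    obtain ⟨t, rfl⟩ : ∃ t, n = 2 * t + 1 := ho
    have e1 : (2*t+1)/2 = t := by omega
    rw [e1]
    rw [show 2*t+1+1 - t = t + 2 by omega]
    zify [show u ≤ 2*t+1 from hun]
    nlinarith [show (3:ℤ) * u ≤ 2*t+1 by exact_mod_cast h3u, show (1:ℤ) ≤ t by omega,
      show (0:ℤ) ≤ (u:ℤ) by positivity]


/-- For every prime power `q ≥ 2` and `n ≥ 2`, with `a` the smallest prime divisor of `n`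
and `d ≥ n − n/a`:
`(1/a)·∏_{k=1, a∤k}^{n-1}(q^n − q^k) + Σ_{k=1, a∤k}^{⌊n/2⌋} binom(n,k)_q ≤ q^{nd}`,
with equality only when `n = q = 2` and `d = 1`. -/
theorem stmt_9 (n q d : ℕ) (hn : 2 ≤ n) (hq2 : 2 ≤ q) (hq : IsPrimePow q)
    (hd : n - n / n.minFac ≤ d) :
    (∏ k ∈ (Finset.Icc 1 (n - 1)).filter (fun k => ¬ n.minFac ∣ k),
        ((q : ℝ) ^ n - (q : ℝ) ^ k)) / (n.minFac : ℝ) +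
      ∑ k ∈ (Finset.Icc 1 (n / 2)).filter (fun k => ¬ n.minFac ∣ k), gbinom q n k ≤
      (q : ℝ) ^ (n * d) ∧
    ((∏ k ∈ (Finset.Icc 1 (n - 1)).filter (fun k => ¬ n.minFac ∣ k),
        ((q : ℝ) ^ n - (q : ℝ) ^ k)) / (n.minFac : ℝ) +
      ∑ k ∈ (Finset.Icc 1 (n / 2)).filter (fun k => ¬ n.minFac ∣ k), gbinom q n k =
      (q : ℝ) ^ (n * d) → n = 2 ∧ q = 2 ∧ d = 1) := by
  have hq2R : (2:ℝ) ≤ (q:ℝ) := by exact_mod_cast hq2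
  have hq1R : (1:ℝ) ≤ (q:ℝ) := by linarith
  by_cases hn2 : n = 2
  · subst hn2
    have hmf : Nat.minFac 2 = 2 := by norm_num
    rw [hmf] at hd ⊢
    have hd1 : 1 ≤ d := by omega
    have hset1 : (Finset.Icc 1 (2 - 1)).filter (fun k => ¬ (2:ℕ) ∣ k) = {1} := by decide
    rw [hset1, Finset.prod_singleton, Finset.sum_singleton]
    have hg : gbinom q 2 1 = (q:ℝ) + 1 := by
      have h1 : (q:ℝ) - 1 ≠ 0 := by linarith
      unfold gbinom
      rw [Finset.prod_range_one]
      norm_num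
      field_simp
      ring
    rw [hg, pow_one]
    push_cast
    by_cases hqq : q = 2
    · subst hqq
      by_cases hdd : d = 1
      · subst hdd
        norm_num
      · have hlt : (((2:ℕ):ℝ) ^ 2 - ((2:ℕ):ℝ)) / 2 + (((2:ℕ):ℝ) + 1)
            < ((2:ℕ):ℝ) ^ (2 * d) := by
          have h16 : (2:ℝ)^4 ≤ (2:ℝ)^(2*d) := pow_le_pow_right₀ (by norm_num) (by omega)
          push_cast
          linarith
        exact ⟨hlt.le, fun h => absurd h hlt.ne⟩
    · have hq3 : (3:ℝ) ≤ (q:ℝ) := by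
        have h3 : 3 ≤ q := by omega
        exact_mod_cast h3
      have hlt : ((q:ℝ) ^ 2 - (q:ℝ)) / 2 + ((q:ℝ) + 1) < (q:ℝ) ^ (2 * d) := by
        have hle : (q:ℝ)^2 ≤ (q:ℝ)^(2*d) := pow_le_pow_right₀ hq1R (by omega)
        nlinarith
      exact ⟨hlt.le, fun h => absurd h hlt.ne⟩
  · -- n ≥ 3 : strict inequality
    have hn3 : 3 ≤ n := by omega
    set a := n.minFac with ha
    have hprime : Nat.Prime a := Nat.minFac_prime (show n ≠ 1 by omega)
    have ha2 : 2 ≤ a := hprime.two_le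
    have han : a ∣ n := Nat.minFac_dvd n
    have haln : a ≤ n := Nat.minFac_le (by omega)
    set u := n / a with hu
    have hu1 : 1 ≤ u := Nat.one_le_div_iff (by omega) |>.mpr haln
    have hu2 : u ≤ n / 2 := Nat.div_le_div_left ha2 (by norm_num)
    have hun2 : n / 2 ≤ n - 2 := by omega
    obtain ⟨M, hM⟩ : ∃ M, n - u = M + 2 := ⟨n - u - 2, by omega⟩
    set F := (Finset.Icc 1 (n - 1)).filter (fun k => ¬ a ∣ k) with hF
    have hdiv : (n-1)/a = u - 1 := by
      obtain ⟨v, hv⟩ : ∃ v, u = v + 1 := ⟨u - 1, by omega⟩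
      have hmul : a * u = n := Nat.mul_div_cancel' han
      rw [hv] at hmul
      have h1 : n - 1 = (a - 1) + a * v := by
        have hh : a * (v+1) = a * v + a := by ring
        rw [hh] at hmul
        generalize a * v = w at hmul ⊢
        omega
      rw [h1, Nat.add_mul_div_left _ _ (show 0 < a by omega), Nat.div_eq_of_lt (by omega), hv]
      omega
    have hcard : F.card = M + 2 := by
      rw [hF, Finset.filter_not, Finset.card_sdiff_of_subset (Finset.filter_subset _ _)]
      rw [show Finset.Icc 1 (n-1) = Finset.Ioc 0 (n-1) by rw [← Finset.Icc_add_one_left_eq_Ioc]; rfl]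
      rw [Nat.Ioc_filter_dvd_card_eq_div, Nat.card_Ioc, hdiv]
      omega
    have h1F : 1 ∈ F := by
      rw [hF, Finset.mem_filter, Finset.mem_Icc]
      refine ⟨⟨le_rfl, by omega⟩, ?_⟩
      rw [Nat.dvd_one]
      omega
    have hfacnn : ∀ k ∈ F, (0:ℝ) ≤ (q:ℝ)^n - (q:ℝ)^k := by
      intro k hk
      rw [hF, Finset.mem_filter, Finset.mem_Icc] at hk
      have : (q:ℝ)^k ≤ (q:ℝ)^n := pow_le_pow_right₀ hq1R (by omega)
      linarith
    have hPnn : (0:ℝ) ≤ ∏ k ∈ F, ((q:ℝ)^n - (q:ℝ)^k) := Finset.prod_nonneg hfacnn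
    have hqnq : (0:ℝ) ≤ (q:ℝ)^n - q := by
      have : (q:ℝ) ≤ (q:ℝ)^n := le_self_pow₀ (by linarith) (by omega)
      linarith
    have hP : (∏ k ∈ F, ((q:ℝ)^n - (q:ℝ)^k)) ≤ ((q:ℝ)^n - q) * (q:ℝ)^(n * (M+1)) := by
      rw [← Finset.mul_prod_erase F _ h1F, pow_one]
      have hstep : ∏ k ∈ F.erase 1, ((q:ℝ)^n - (q:ℝ)^k) ≤ ∏ k ∈ F.erase 1, (q:ℝ)^n := by
        apply Finset.prod_le_prod
        · intro k hk; exact hfacnn k (Finset.mem_of_mem_erase hk)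
        · intro k hk
          have : (0:ℝ) < (q:ℝ)^k := by positivity
          linarith
      calc ((q:ℝ)^n - q) * ∏ k ∈ F.erase 1, ((q:ℝ)^n - (q:ℝ)^k)
          ≤ ((q:ℝ)^n - q) * ∏ k ∈ F.erase 1, (q:ℝ)^n :=
            mul_le_mul_of_nonneg_left hstep hqnq
      _ = ((q:ℝ)^n - q) * (q:ℝ)^(n*(M+1)) := by
            rw [Finset.prod_const, Finset.card_erase_of_mem h1F, hcard, ← pow_mul]
            norm_num
    -- sum bound
    have hSb : (∑ k ∈ (Finset.Icc 1 (n / 2)).filter (fun k => ¬ a ∣ k), gbinom q n k)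
        ≤ 2 * (q:ℝ)^((n/2) * (n + 1 - n/2)) := by
      calc (∑ k ∈ (Finset.Icc 1 (n / 2)).filter (fun k => ¬ a ∣ k), gbinom q n k)
          ≤ ∑ k ∈ (Finset.Icc 1 (n/2)).filter (fun k => ¬ a ∣ k), (q:ℝ)^(k*(n+1-k)) := by
            apply Finset.sum_le_sum
            intro k hk
            rw [Finset.mem_filter, Finset.mem_Icc] at hk
            exact gbinom_le_pow q n k hq2 (by omega)
        _ ≤ ∑ k ∈ Finset.range (n/2 + 1), (q:ℝ)^(k*(n+1-k)) := by
            apply Finset.sum_le_sum_of_subset_of_nonneg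
            · intro k hk
              rw [Finset.mem_filter, Finset.mem_Icc] at hk
              rw [Finset.mem_range]; omega
            · intros
              positivity
        _ ≤ _ := sum_pow_le q n hq2 (n/2) (by omega)
    -- exponent bound
    have hE : (n/2) * (n + 1 - n/2) + 2 ≤ n * (M+2) := by
      have h := expD n hn3
      rw [← ha, ← hu, hM] at h
      exact h
    -- final
    have hsplit : (q:ℝ)^(n*(M+2)) = (q:ℝ)^n * (q:ℝ)^(n*(M+1)) := by
      rw [← pow_add]
      congr 1
      ring
    have h4E : 4 * (q:ℝ)^((n/2) * (n + 1 - n/2)) ≤ (q:ℝ)^(n*(M+2)) := by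
      calc 4 * (q:ℝ)^((n/2) * (n + 1 - n/2))
          ≤ (q:ℝ)^2 * (q:ℝ)^((n/2) * (n + 1 - n/2)) := by
            have h0 : (0:ℝ) ≤ (q:ℝ)^((n/2) * (n + 1 - n/2)) := by positivity
            have hq4 : (4:ℝ) ≤ (q:ℝ)^2 := by nlinarith
            nlinarith [h0, hq4]
      _ = (q:ℝ)^((n/2) * (n + 1 - n/2) + 2) := by rw [← pow_add]; ring_nf
      _ ≤ (q:ℝ)^(n*(M+2)) := pow_le_pow_right₀ hq1R hE
    have haR : (2:ℝ) ≤ (a:ℝ) := by exact_mod_cast ha2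
    have hPbnn : (0:ℝ) ≤ ((q:ℝ)^n - q) * (q:ℝ)^(n * (M+1)) := by positivity
    have hlt : (∏ k ∈ F, ((q:ℝ)^n - (q:ℝ)^k)) / (a:ℝ)
        + (∑ k ∈ (Finset.Icc 1 (n / 2)).filter (fun k => ¬ a ∣ k), gbinom q n k)
        < (q:ℝ)^(n*d) := by
      have s1 : (∏ k ∈ F, ((q:ℝ)^n - (q:ℝ)^k)) / (a:ℝ)
          ≤ (((q:ℝ)^n - q) * (q:ℝ)^(n * (M+1))) / 2 := by
        apply div_le_div₀ hPbnn hP (by norm_num) haR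
      have hX : (0:ℝ) < (q:ℝ)^(n*(M+1)) := by positivity
      have hqX : (0:ℝ) < (q:ℝ) * (q:ℝ)^(n*(M+1)) := by positivity
      have s2 : (((q:ℝ)^n - q) * (q:ℝ)^(n * (M+1))) / 2
          + 2 * (q:ℝ)^((n/2) * (n + 1 - n/2)) < (q:ℝ)^(n*(M+2)) := by
        rw [hsplit] at h4E ⊢
        nlinarith [h4E, hqX]
      have s3 : (q:ℝ)^(n*(M+2)) ≤ (q:ℝ)^(n*d) := by
        apply pow_le_pow_right₀ hq1R
        apply Nat.mul_le_mul_left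
        omega
      calc (∏ k ∈ F, ((q:ℝ)^n - (q:ℝ)^k)) / (a:ℝ)
          + (∑ k ∈ (Finset.Icc 1 (n / 2)).filter (fun k => ¬ a ∣ k), gbinom q n k)
          ≤ (((q:ℝ)^n - q) * (q:ℝ)^(n * (M+1))) / 2
            + 2 * (q:ℝ)^((n/2) * (n + 1 - n/2)) := add_le_add s1 hSb
        _ < (q:ℝ)^(n*(M+2)) := s2
        _ ≤ (q:ℝ)^(n*d) := s3
    exact ⟨hlt.le, fun h => absurd h hlt.ne⟩
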